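/- Define words t_n over the alphabet {N, N+1} by t₀ = (N+1)NN and t_{n+1} = t_n⁺ φ₁(t_n⁺), where t_n⁺ denotes t_n with its last letter increased by 1, and φ₁ is the involution on length-3 blocks swapping (N+1)N(N+1) ↔ NNN and (N+1)NN ↔ NN(N+1) applied blockwise. Then for every n ≥ 0, the word t_n⁺ equals λ₁λ₂⋯λ_{3·2ⁿ}, where λ_{3k+1}=τ_{2k+1}+N, λ_{3k+2}=N, λ_{3k+3}=τ_{2k+2}+N. -/

import Mathlib

/-- Flip a letter between N and N+1. -/
def flipLetter (N x : ℕ) : ℕ := if x = N then N + 1 else N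

/-- The blockwise involution φ₁: on each length-3 block it flips the first and
third letters between N and N+1 and keeps the middle letter; this realizes the
swaps (N+1)N(N+1) ↔ NNN and (N+1)NN ↔ NN(N+1). -/
def phi1 (N : ℕ) : List ℕ → List ℕ
  | a :: b :: c :: rest => flipLetter N a :: b :: flipLetter N c :: phi1 N rest
  | l => l

/-- Increase the last letter of a word by 1. -/
def plusWord : List ℕ → List ℕ
  | [] => []
  | [a] => [a + 1]
  | a :: b :: rest => a :: plusWord (b :: rest)

/-- The words t_n: t₀ = (N+1)NN, t_{n+1} = t_n⁺ φ₁(t_n⁺). -/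
def tword (N : ℕ) : ℕ → List ℕ
  | 0 => [N + 1, N, N]
  | n + 1 => plusWord (tword N n) ++ phi1 N (plusWord (tword N n))

lemma plusWord_length (l : List ℕ) : (plusWord l).length = l.length := by
  induction l with
  | nil => rfl
  | cons a tail ih =>
    cases tail with
    | nil => rfl
    | cons b rest => simp [plusWord] at ih ⊢; omega

lemma phi1_length (N : ℕ) (l : List ℕ) : (phi1 N l).length = l.length := by
  induction l using phi1.induct with
  | case1 a b c rest ih => simp [phi1, ih]
  | case2 l h =>
    rcases l with _ | ⟨a, _ | ⟨b, _ | ⟨c, rest⟩⟩⟩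
    · rfl
    · rfl
    · rfl
    · exact absurd rfl (h a b c rest)

lemma plusWord_getElem (l : List ℕ) (j : ℕ) (h : j < l.length) :
    (plusWord l)[j]'(by rw [plusWord_length]; exact h) =
      if j + 1 = l.length then l[j] + 1 else l[j] := by
  induction l generalizing j with
  | nil => simp at h
  | cons a tail ih =>
    cases tail with
    | nil =>
      simp at h
      subst h
      simp [plusWord]
    | cons b rest =>
      simp only [plusWord]
      cases j with
      | zero => simp
      | succ j' =>
        simp only [List.getElem_cons_succ]
        rw [ih j' (by simpa using h)]
        simp only [List.length_cons]
        by_cases hc : j' + 1 = rest.length + 1 <;> simp [hc] <;> omega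

lemma plusWord_cons_ne_nil (a : ℕ) (l : List ℕ) (h : l ≠ []) :
    plusWord (a :: l) = a :: plusWord l := by
  cases l with
  | nil => exact absurd rfl h
  | cons b rest => rfl

lemma plusWord_append (l₁ l₂ : List ℕ) (h : l₂ ≠ []) :
    plusWord (l₁ ++ l₂) = l₁ ++ plusWord l₂ := by
  induction l₁ with
  | nil => rfl
  | cons a tl ih =>
    have : tl ++ l₂ ≠ [] := by simp [h]
    rw [List.cons_append, plusWord_cons_ne_nil a _ this, ih]
    rfl

lemma phi1_getElem (N : ℕ) (l : List ℕ) (hd : 3 ∣ l.length) (j : ℕ) (h : j < l.length) :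
    (phi1 N l)[j]'(by rw [phi1_length]; exact h) =
      if j % 3 = 1 then l[j] else flipLetter N l[j] := by
  induction l using phi1.induct generalizing j with
  | case1 a b c rest ih =>
    simp only [phi1]
    match j with
    | 0 => simp
    | 1 => simp
    | 2 => simp
    | (j' + 3) =>
      simp only [List.getElem_cons_succ]
      have hd' : 3 ∣ rest.length := by simp at hd; omega
      have h' : j' < rest.length := by simp at h; omega
      rw [ih hd' j' h']
      have : (j' + 3) % 3 = j' % 3 := by omega
      simp [this]
  | case2 l hl =>
    rcases l with _ | ⟨a, _ | ⟨b, _ | ⟨c, rest⟩⟩⟩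
    · simp at h
    · simp at hd
    · simp at hd
    · exact absurd rfl (hl a b c rest)

section
variable (τ : ℕ → ℕ) (hτ0 : τ 0 = 0) (hτe : ∀ i, τ (2 * i) = τ i)
  (hτo : ∀ i, τ (2 * i + 1) = 1 - τ i)
include hτ0 hτe hτo

lemma tau_le_one : ∀ m, τ m ≤ 1 := by
  intro m
  induction m using Nat.strong_induction_on with
  | _ m ih =>
    rcases Nat.even_or_odd m with ⟨i, hi⟩ | ⟨i, hi⟩
    · subst hi
      rcases Nat.eq_zero_or_pos i with h0 | h0
      · simp [h0, hτ0]
      · rw [show i + i = 2 * i by ring, hτe]; exact ih i (by omega)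
    · subst hi
      rw [hτo]; omega

lemma tau_pow (j : ℕ) : τ (2 ^ (j + 1)) = 1 := by
  induction j with
  | zero =>
    have := hτo 0
    have := hτe 1
    simp [hτ0] at *
    omega
  | succ j ih =>
    have := hτe (2 ^ (j + 1))
    rw [show 2 * 2 ^ (j + 1) = 2 ^ (j + 2) by ring] at this
    show τ (2 ^ (j + 2)) = 1
    omega

lemma tau_add_pow : ∀ j m, m < 2 ^ j → τ (2 ^ j + m) = 1 - τ m := by
  intro j
  induction j with
  | zero =>
    intro m hm
    interval_cases m
    have := hτo 0
    simp [hτ0] at *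
    omega
  | succ j ih =>
    intro m hm
    rcases Nat.even_or_odd m with ⟨i, hi⟩ | ⟨i, hi⟩
    · have e : 2 ^ (j + 1) + m = 2 * (2 ^ j + i) := by omega
      rw [e, hτe, ih i (by omega), show m = 2 * i by omega, hτe]
    · have e : 2 ^ (j + 1) + m = 2 * (2 ^ j + i) + 1 := by omega
      rw [e, hτo, ih i (by omega), show m = 2 * i + 1 by omega, hτo]

end

lemma flip_tau (N : ℕ) (t : ℕ) (ht : t ≤ 1) : flipLetter N (t + N) = (1 - t) + N := by
  interval_cases t
  · simp [flipLetter]; omega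
  · have h : 1 + N ≠ N := by omega
    simp [flipLetter, h]

/-- The key arithmetic identity for the second half of the word. -/
lemma key_step (N : ℕ) (τ : ℕ → ℕ)
    (hτ0 : τ 0 = 0) (hτe : ∀ i, τ (2 * i) = τ i) (hτo : ∀ i, τ (2 * i + 1) = 1 - τ i)
    (lam : ℕ → ℕ)
    (h1 : ∀ k, lam (3 * k + 1) = τ (2 * k + 1) + N)
    (h2 : ∀ k, lam (3 * k + 2) = N)
    (h3 : ∀ k, lam (3 * k + 3) = τ (2 * k + 2) + N)
    (n i : ℕ) (hi : i < 3 * 2 ^ n) :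
    (if i + 1 = 3 * 2 ^ n then
        (if i % 3 = 1 then lam (i + 1) else flipLetter N (lam (i + 1))) + 1
      else (if i % 3 = 1 then lam (i + 1) else flipLetter N (lam (i + 1))))
      = lam (3 * 2 ^ n + i + 1) := by
  have hle := tau_le_one τ hτ0 hτe hτo
  have hpow := tau_pow τ hτ0 hτe hτo
  have hadd := tau_add_pow τ hτ0 hτe hτo
  have hpn : (2 : ℕ) ^ (n + 1) = 2 ^ n + 2 ^ n := by rw [pow_succ]; ring
  have hpn2 : (2 : ℕ) ^ (n + 2) = 2 ^ (n + 1) + 2 ^ (n + 1) := by rw [pow_succ 2 (n+1)]; ring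
  obtain ⟨k, r, hr3, rfl⟩ : ∃ k r, r < 3 ∧ i = 3 * k + r :=
    ⟨i / 3, i % 3, by omega, by omega⟩
  have hk : k < 2 ^ n := by omega
  interval_cases r
  · -- r = 0
    rw [if_neg (show ¬(3 * k + 0 + 1 = 3 * 2 ^ n) by omega),
        if_neg (show ¬((3 * k + 0) % 3 = 1) by omega),
        show 3 * k + 0 + 1 = 3 * k + 1 by ring, h1 k,
        show 3 * 2 ^ n + (3 * k + 0) + 1 = 3 * (2 ^ n + k) + 1 by ring, h1 (2 ^ n + k),
        show 2 * (2 ^ n + k) + 1 = 2 ^ (n + 1) + (2 * k + 1) by omega,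
        hadd (n + 1) (2 * k + 1) (by omega),
        flip_tau N _ (hle _)]
  · -- r = 1
    rw [if_neg (show ¬(3 * k + 1 + 1 = 3 * 2 ^ n) by omega),
        if_pos (show (3 * k + 1) % 3 = 1 by omega),
        show 3 * k + 1 + 1 = 3 * k + 2 by ring, h2 k,
        show 3 * 2 ^ n + (3 * k + 1) + 1 = 3 * (2 ^ n + k) + 2 by ring, h2 (2 ^ n + k)]
  · -- r = 2
    rw [if_neg (show ¬((3 * k + 2) % 3 = 1) by omega),
        show 3 * k + 2 + 1 = 3 * k + 3 by ring, h3 k,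
        show 3 * 2 ^ n + (3 * k + 2) + 1 = 3 * (2 ^ n + k) + 3 by ring, h3 (2 ^ n + k)]
    by_cases hb : 3 * k + 2 + 1 = 3 * 2 ^ n
    · -- boundary: k + 1 = 2 ^ n
      rw [if_pos hb]
      have hk1 : k + 1 = 2 ^ n := by omega
      have e1 : 2 * k + 2 = 2 ^ (n + 1) := by omega
      have e2 : 2 * (2 ^ n + k) + 2 = 2 ^ (n + 2) := by omega
      rw [e1, e2, hpow n, hpow (n + 1), flip_tau N 1 (by norm_num)]
      omega
    · rw [if_neg hb]
      have hk1 : k + 1 < 2 ^ n := by omega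
      rw [show 2 * (2 ^ n + k) + 2 = 2 ^ (n + 1) + (2 * k + 2) by omega,
          hadd (n + 1) (2 * k + 2) (by omega),
          flip_tau N _ (hle _)]

/-- t_n⁺ = λ₁⋯λ_{3·2ⁿ}. -/
theorem tword_plus_eq_lambda_prefix (N : ℕ) (τ : ℕ → ℕ)
    (hτ0 : τ 0 = 0) (hτe : ∀ i, τ (2 * i) = τ i) (hτo : ∀ i, τ (2 * i + 1) = 1 - τ i)
    (lam : ℕ → ℕ)
    (h1 : ∀ k, lam (3 * k + 1) = τ (2 * k + 1) + N)
    (h2 : ∀ k, lam (3 * k + 2) = N)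
    (h3 : ∀ k, lam (3 * k + 3) = τ (2 * k + 2) + N)
    (n : ℕ) :
    plusWord (tword N n) = List.ofFn (fun t : Fin (3 * 2 ^ n) => lam ((t : ℕ) + 1)) := by
  induction n with
  | zero =>
    have e1 : lam 1 = τ 1 + N := by simpa using h1 0
    have e2 : lam 2 = N := by simpa using h2 0
    have e3 : lam 3 = τ 2 + N := by simpa using h3 0
    have t1 : τ 1 = 1 := by have := hτo 0; simp [hτ0] at this; omega
    have t2 : τ 2 = 1 := by have := hτe 1; norm_num at this; omega
    show plusWord (tword N 0) = List.ofFn (fun t : Fin 3 => lam ((t : ℕ) + 1))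
    simp [tword, plusWord, List.ofFn_succ, e1, e2, e3, t1, t2]
    omega
  | succ n ih =>
    have hpn : 3 * 2 ^ (n + 1) = 3 * 2 ^ n + 3 * 2 ^ n := by rw [pow_succ]; ring
    set f : Fin (3 * 2 ^ n) → ℕ := fun t => lam ((t : ℕ) + 1) with hf
    have hnn : phi1 N (List.ofFn f) ≠ [] := by
      intro h
      have := phi1_length N (List.ofFn f)
      rw [h] at this
      simp at this
    rw [show tword N (n + 1) = plusWord (tword N n) ++ phi1 N (plusWord (tword N n)) from rfl,
        ih, plusWord_append _ _ hnn]
    apply List.ext_getElem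
    · simp [plusWord_length, phi1_length, hpn]
    · intro j hj1 hj2
      simp only [List.length_ofFn] at hj2
      rw [List.getElem_ofFn]
      by_cases hcase : j < 3 * 2 ^ n
      · rw [List.getElem_append_left (by simpa using hcase), List.getElem_ofFn]
      · have hij : 3 * 2 ^ n ≤ j := le_of_not_gt hcase
        rw [List.getElem_append_right (by simpa using hij)]
        obtain ⟨i, rfl⟩ : ∃ i, j = 3 * 2 ^ n + i := ⟨j - 3 * 2 ^ n, by omega⟩
        have hi : i < 3 * 2 ^ n := by omega
        simp only [List.length_ofFn, Nat.add_sub_cancel_left]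
        rw [plusWord_getElem _ _ (by simp [phi1_length, hi]),
            phi1_getElem N _ (by simp) i (by simp [hi])]
        simp only [List.getElem_ofFn, phi1_length, List.length_ofFn, hf]
        exact key_step N τ hτ0 hτe hτo lam h1 h2 h3 n i hi
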